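/- Let d ≥ 1 and let n₁,…,n_d be even positive integers with n_i ≠ 4 for all i. Let G be the graph on vertex set ∏_{i=1}^{d} {0,…,n_i − 1} in which two vertices u, v are adjacent if and only if u_i ≠ v_i for every coordinate i (the tensor product K_{n₁} × ⋯ × K_{n_d} of complete graphs). Then there exists a real symmetric matrix M ∈ S(G) with zero diagonal satisfying M² = I; hence M has exactly the two distinct eigenvalues 1 and −1, and q(G) = 2. In particular, for every even n ≠ 4 and every d ≥ 1, the distance-d graph H(d,n,d) of the Hamming graph (vertices the d-tuples over {0,…,n−1}, adjacent iff they differ in all d coordinates) satisfies q(H(d,n,d)) = 2. -/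

import Mathlib

open Matrix

/-- `S(G)`: real symmetric matrices whose off-diagonal zero/nonzero pattern
matches the adjacency of `G`; the diagonal is unconstrained. -/
def Sset {V : Type*} [Fintype V] [DecidableEq V] (G : SimpleGraph V) : Set (Matrix V V ℝ) :=
  {M | M.IsSymm ∧ ∀ u v : V, u ≠ v → (M u v ≠ 0 ↔ G.Adj u v)}

/-- `q(G)`: the minimum number of distinct eigenvalues over matrices in `S(G)`. -/
noncomputable def minQ {V : Type*} [Fintype V] [DecidableEq V] (G : SimpleGraph V) : ℕ :=
  sInf {k : ℕ | ∃ M ∈ Sset G, (spectrum ℝ M).ncard = k}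

/-- The tensor product `K_{n₁} × ⋯ × K_{n_d}` of complete graphs: vertices are tuples in
`∏ i, {0,…,n i − 1}`, and two (distinct) vertices are adjacent iff they differ in every
coordinate. -/
def tensorComplete (d : ℕ) (n : Fin d → ℕ) : SimpleGraph ((i : Fin d) → Fin (n i)) where
  Adj u v := u ≠ v ∧ ∀ i, u i ≠ v i
  symm := ⟨fun u v h => ⟨h.1.symm, fun i => (h.2 i).symm⟩⟩
  loopless := ⟨fun u h => h.1 rfl⟩

/-- The distance-`d` graph `H(d,n,d)` of the Hamming graph: vertices are `d`-tuples over
an `n`-set, adjacent iff they differ in all `d` coordinates. -/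
def HammingDistD (d n : ℕ) : SimpleGraph (Fin d → Fin n) where
  Adj u v := u ≠ v ∧ hammingDist u v = d
  symm := ⟨fun u v h => ⟨h.1.symm, by rw [hammingDist_comm]; exact h.2⟩⟩
  loopless := ⟨fun u h => h.1 rfl⟩

/-! ### Auxiliary construction

For every even `k > 0` with `k ≠ 4` we construct a symmetric orthogonal `k × k` real
matrix with zero diagonal and all off-diagonal entries nonzero.  Writing `k = 2m`, it has
the block form `[[C, S], [S, -C]]` where `C = a(J - I)` and `S = sI + t(J - I)` are
commuting circulant-type matrices built from the all-ones matrix `J`, with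
`C² + S² = I`. -/

noncomputable section Stmt17Aux

namespace Stmt17

/-- all-ones matrix -/
def Jm (m : ℕ) : Matrix (Fin m) (Fin m) ℝ := Matrix.of fun _ _ => (1 : ℝ)

def am (m : ℕ) : ℝ := 1 / (2 * ((m : ℝ) - 1))
def xm (m : ℕ) : ℝ := Real.sqrt (1 - ((m : ℝ) - 1) ^ 2 * am m ^ 2)
def ym (m : ℕ) : ℝ := Real.sqrt (1 - am m ^ 2)
def sm (m : ℕ) : ℝ := (xm m + ((m : ℝ) - 1) * ym m) / m
def tm (m : ℕ) : ℝ := (xm m - ym m) / m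

def Cmat (m : ℕ) : Matrix (Fin m) (Fin m) ℝ := am m • Jm m + (-(am m)) • 1
def Smat (m : ℕ) : Matrix (Fin m) (Fin m) ℝ := tm m • Jm m + (sm m - tm m) • 1
def Bmat (m : ℕ) : Matrix (Fin m ⊕ Fin m) (Fin m ⊕ Fin m) ℝ :=
  fromBlocks (Cmat m) (Smat m) (Smat m) (-(Cmat m))

variable {m : ℕ}

lemma am_one : am 1 = 0 := by simp [am]

lemma am_eq (hm : 3 ≤ m) : ((m : ℝ) - 1) * am m = 1 / 2 := by
  have h : ((m : ℝ) - 1) ≠ 0 := by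
    have : (3 : ℝ) ≤ (m : ℝ) := by exact_mod_cast hm
    nlinarith
  rw [am]
  field_simp

lemma am_pos (hm : 3 ≤ m) : 0 < am m := by
  have : (3 : ℝ) ≤ (m : ℝ) := by exact_mod_cast hm
  have : (0 : ℝ) < 2 * ((m : ℝ) - 1) := by nlinarith
  exact div_pos one_pos this

lemma am_le (hm : 3 ≤ m) : am m ≤ 1 / 4 := by
  have h3 : (3 : ℝ) ≤ (m : ℝ) := by exact_mod_cast hm
  rw [am, div_le_div_iff₀ (by nlinarith) (by norm_num)]
  nlinarith

lemma hmsq (hm : m = 1 ∨ 3 ≤ m) : ((m : ℝ) - 1) ^ 2 * am m ^ 2 ≤ 1 / 4 := by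
  rcases hm with h | h
  · subst h; simp [am_one]
  · have := am_eq h
    nlinarith [this]

lemma am_sq_le (hm : m = 1 ∨ 3 ≤ m) : am m ^ 2 ≤ 1 / 16 := by
  rcases hm with h | h
  · subst h; simp [am_one]
  · have h1 := am_pos h
    have h2 := am_le h
    nlinarith

lemma xm_sq (hm : m = 1 ∨ 3 ≤ m) : xm m ^ 2 = 1 - ((m : ℝ) - 1) ^ 2 * am m ^ 2 := by
  rw [xm, Real.sq_sqrt]
  have := hmsq hm
  linarith

lemma ym_sq (hm : m = 1 ∨ 3 ≤ m) : ym m ^ 2 = 1 - am m ^ 2 := by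
  rw [ym, Real.sq_sqrt]
  have := am_sq_le hm
  linarith

lemma xm_pos (hm : m = 1 ∨ 3 ≤ m) : 0 < xm m := by
  rw [xm]
  apply Real.sqrt_pos.2
  have := hmsq hm
  linarith

lemma ym_nonneg : 0 ≤ ym m := Real.sqrt_nonneg _

lemma sm_pos (hm1 : 1 ≤ m) (hm : m = 1 ∨ 3 ≤ m) : 0 < sm m := by
  have h1 : (0 : ℝ) < m := by exact_mod_cast hm1
  have h2 : (1 : ℝ) ≤ (m : ℝ) := by exact_mod_cast hm1
  have := xm_pos hm
  have := ym_nonneg (m := m)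
  apply div_pos _ h1
  nlinarith

lemma sm_ne (hm1 : 1 ≤ m) (hm : m = 1 ∨ 3 ≤ m) : sm m ≠ 0 := ne_of_gt (sm_pos hm1 hm)

lemma tm_ne (hm : 3 ≤ m) : tm m ≠ 0 := by
  have hx2 := xm_sq (Or.inr hm)
  have hy2 := ym_sq (Or.inr hm)
  have ha := am_eq hm
  have ha2 : ((m : ℝ) - 1) ^ 2 * am m ^ 2 = 1 / 4 := by nlinarith
  have hasq := am_sq_le (Or.inr hm)
  have hxy : xm m < ym m := by
    have h1 : xm m ^ 2 < ym m ^ 2 := by nlinarith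
    have := xm_pos (Or.inr hm)
    have := ym_nonneg (m := m)
    nlinarith
  have hm0 : (0 : ℝ) < m := by positivity
  rw [tm]
  intro h
  rw [div_eq_zero_iff] at h
  rcases h with h | h
  · linarith
  · linarith

lemma am_ne (hm : 3 ≤ m) : am m ≠ 0 := ne_of_gt (am_pos hm)

lemma J_mul_J : Jm m * Jm m = (m : ℝ) • Jm m := by
  ext i j
  simp [Jm, Matrix.mul_apply]

lemma mul_rep (α β γ δ : ℝ) :
    (α • Jm m + β • (1 : Matrix (Fin m) (Fin m) ℝ)) * (γ • Jm m + δ • 1) =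
      (α * γ * m + α * δ + β * γ) • Jm m + (β * δ) • 1 := by
  simp only [add_mul, mul_add, smul_mul_assoc, mul_smul_comm, smul_smul, J_mul_J,
    one_mul, mul_one]
  match_scalars <;> ring

lemma st_sub (hm1 : 1 ≤ m) : sm m - tm m = ym m := by
  have hm0 : (m : ℝ) ≠ 0 := by positivity
  rw [sm, tm, ← sub_div]
  field_simp
  ring

lemma coefJ (hm1 : 1 ≤ m) (hm : m = 1 ∨ 3 ≤ m) :
    tm m * tm m * m + tm m * (sm m - tm m) + (sm m - tm m) * tm m +
      (am m * am m * m + am m * (-(am m)) + (-(am m)) * am m) = 0 := by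
  have hm0 : (m : ℝ) ≠ 0 := by positivity
  have hx := xm_sq hm
  have hy := ym_sq hm
  rw [st_sub hm1]
  simp only [tm]
  field_simp
  linear_combination hx - hy

lemma coef1 (hm1 : 1 ≤ m) (hm : m = 1 ∨ 3 ≤ m) :
    (sm m - tm m) * (sm m - tm m) + (-(am m)) * (-(am m)) = 1 := by
  have hy := ym_sq hm
  rw [st_sub hm1]
  nlinarith [hy]

lemma CC_SS (hm1 : 1 ≤ m) (hm : m = 1 ∨ 3 ≤ m) :
    Cmat m * Cmat m + Smat m * Smat m = 1 := by
  rw [Cmat, Smat, mul_rep, mul_rep]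
  have h1 := coefJ hm1 hm
  have h2 := coef1 hm1 hm
  match_scalars
  · linarith [h1]
  · linarith [h2]

lemma CS_comm : Cmat m * Smat m = Smat m * Cmat m := by
  rw [Cmat, Smat, mul_rep, mul_rep]
  match_scalars <;> ring

lemma Csymm : (Cmat m).IsSymm := by
  rw [Matrix.IsSymm, Cmat]
  ext i j
  simp [Jm, Matrix.transpose_apply, Matrix.one_apply]
  split <;> simp_all [eq_comm]

lemma Ssymm : (Smat m).IsSymm := by
  rw [Matrix.IsSymm, Smat]
  ext i j
  simp [Jm, Matrix.transpose_apply, Matrix.one_apply]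
  split <;> simp_all [eq_comm]

lemma Bsq (hm1 : 1 ≤ m) (hm : m = 1 ∨ 3 ≤ m) : Bmat m * Bmat m = 1 := by
  have h1 := CC_SS hm1 hm
  have h2 : Cmat m * Smat m + Smat m * (-(Cmat m)) = 0 := by
    rw [mul_neg, CS_comm]; simp
  have h3 : Smat m * Cmat m + (-(Cmat m)) * Smat m = 0 := by
    rw [neg_mul, CS_comm]; simp
  have h4 : Smat m * Smat m + (-(Cmat m)) * (-(Cmat m)) = 1 := by
    rw [neg_mul_neg, add_comm]; exact CC_SS hm1 hm
  rw [Bmat, fromBlocks_multiply, h1, h2, h3, h4, fromBlocks_one]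

lemma Bsymm : (Bmat m).IsSymm := by
  rw [Matrix.IsSymm, Bmat, fromBlocks_transpose, Csymm, Ssymm, Matrix.transpose_neg, Csymm]

lemma Bdiag (u : Fin m ⊕ Fin m) : Bmat m u u = 0 := by
  cases u <;>
    simp [Bmat, Cmat, fromBlocks, Jm, Matrix.one_apply]

lemma two_le_of_ne {i j : Fin m} (h : i ≠ j) : 3 ≤ m ∨ m = 2 := by
  have : ¬ Subsingleton (Fin m) := fun hs => h (hs.allEq i j)
  rw [Fin.subsingleton_iff_le_one] at this
  omega

lemma Bne (hm1 : 1 ≤ m) (hm : m = 1 ∨ 3 ≤ m) {u v : Fin m ⊕ Fin m} (h : u ≠ v) :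
    Bmat m u v ≠ 0 := by
  have hm2 : m ≠ 2 := by omega
  rcases u with i | i <;> rcases v with j | j
  · have hij : i ≠ j := fun e => h (by rw [e])
    have h3 : 3 ≤ m := by rcases two_le_of_ne hij with h' | h' <;> omega
    simp only [Bmat, fromBlocks, Sum.elim_inl, Cmat, Jm]
    simp [Matrix.one_apply, hij, am_ne h3]
  · simp only [Bmat, fromBlocks, Sum.elim_inl, Sum.elim_inr, Smat, Jm]
    by_cases hij : i = j
    · subst hij; simp [Matrix.one_apply]
      simpa using sm_ne hm1 hm
    · have h3 : 3 ≤ m := by rcases two_le_of_ne hij with h' | h' <;> omega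
      simp [Matrix.one_apply, hij, tm_ne h3]
  · simp only [Bmat, fromBlocks, Sum.elim_inl, Sum.elim_inr, Smat, Jm]
    by_cases hij : i = j
    · subst hij; simp [Matrix.one_apply]
      simpa using sm_ne hm1 hm
    · have h3 : 3 ≤ m := by rcases two_le_of_ne hij with h' | h' <;> omega
      simp [Matrix.one_apply, hij, tm_ne h3]
  · have hij : i ≠ j := fun e => h (by rw [e])
    have h3 : 3 ≤ m := by rcases two_le_of_ne hij with h' | h' <;> omega
    simp only [Bmat, fromBlocks, Sum.elim_inr, Cmat, Jm]
    simp [Matrix.one_apply, hij, am_ne h3]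

/-- The basic `k × k` block, transported to `Fin k`. -/
def Amat (k : ℕ) : Matrix (Fin k) (Fin k) ℝ :=
  if h : k / 2 + k / 2 = k then
    (Bmat (k / 2)).submatrix ((finSumFinEquiv.trans (finCongr h)).symm : Fin k → _)
      ((finSumFinEquiv.trans (finCongr h)).symm : Fin k → _)
  else 0

section Akey
variable {k : ℕ} (hk : k / 2 + k / 2 = k)
include hk

lemma Amat_eq :
    Amat k = (Bmat (k / 2)).submatrix ((finSumFinEquiv.trans (finCongr hk)).symm : Fin k → _)
      ((finSumFinEquiv.trans (finCongr hk)).symm : Fin k → _) := by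
  rw [Amat, dif_pos hk]

lemma Amat_symm : (Amat k).IsSymm := by
  rw [Amat_eq hk, Matrix.IsSymm, Matrix.transpose_submatrix, Bsymm]

lemma Amat_diag (i : Fin k) : Amat k i i = 0 := by
  rw [Amat_eq hk]; exact Bdiag _

lemma Amat_ne (hpos : 0 < k) (h4 : k ≠ 4) {i j : Fin k} (h : i ≠ j) : Amat k i j ≠ 0 := by
  rw [Amat_eq hk]
  exact Bne (by omega) (by omega : k / 2 = 1 ∨ 3 ≤ k / 2)
    (fun e => h (by simpa using congrArg (finSumFinEquiv.trans (finCongr hk)) e))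

lemma Amat_sq (hpos : 0 < k) (h4 : k ≠ 4) : Amat k * Amat k = 1 := by
  rw [Amat_eq hk, Matrix.submatrix_mul_equiv, Bsq (by omega) (by omega : k / 2 = 1 ∨ 3 ≤ k / 2),
    Matrix.submatrix_one_equiv]

end Akey

variable {d : ℕ} (n : Fin d → ℕ)

/-- The tensor (Kronecker) product of the matrices `Amat (n i)`. -/
def Mbig : Matrix ((i : Fin d) → Fin (n i)) ((i : Fin d) → Fin (n i)) ℝ :=
  Matrix.of fun u v => ∏ i, Amat (n i) (u i) (v i)

variable {n}
variable (he : ∀ i, n i / 2 + n i / 2 = n i) (hpos : ∀ i, 0 < n i) (h4 : ∀ i, n i ≠ 4)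

include he in
lemma Mbig_symm : (Mbig n).IsSymm := by
  rw [Matrix.IsSymm]
  ext u v
  simp only [Mbig, Matrix.transpose_apply, Matrix.of_apply]
  refine Finset.prod_congr rfl fun i _ => ?_
  exact (Amat_symm (he i)).apply _ _

include he in
lemma Mbig_diag (hd : 1 ≤ d) (u : (i : Fin d) → Fin (n i)) : Mbig n u u = 0 := by
  have i0 : Fin d := ⟨0, hd⟩
  exact Finset.prod_eq_zero (Finset.mem_univ i0) (Amat_diag (he i0) _)

include he hpos h4 in
lemma Mbig_sq : Mbig n * Mbig n = 1 := by
  ext u w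
  rw [Matrix.mul_apply]
  have : ∀ v, Mbig n u v * Mbig n v w
      = ∏ i, (Amat (n i) (u i) (v i) * Amat (n i) (v i) (w i)) := by
    intro v
    simp only [Mbig, Matrix.of_apply]
    rw [Finset.prod_mul_distrib]
  simp only [this]
  rw [← Fintype.prod_sum fun i b => Amat (n i) (u i) b * Amat (n i) b (w i)]
  have hone : ∀ i : Fin d, (∑ b, Amat (n i) (u i) b * Amat (n i) b (w i)) =
      (1 : Matrix (Fin (n i)) (Fin (n i)) ℝ) (u i) (w i) := by
    intro i
    rw [← Matrix.mul_apply, Amat_sq (he i) (hpos i) (h4 i)]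
  simp only [hone, Matrix.one_apply]
  by_cases h : u = w
  · subst h; simp
  · rw [if_neg h]
    obtain ⟨i, hi⟩ : ∃ i, u i ≠ w i := by
      by_contra hc
      push_neg at hc
      exact h (funext hc)
    exact Finset.prod_eq_zero (Finset.mem_univ i) (by rw [if_neg hi])

include he hpos h4 in
lemma Mbig_ne {u v : (i : Fin d) → Fin (n i)} (h : ∀ i, u i ≠ v i) : Mbig n u v ≠ 0 := by
  rw [Mbig, Matrix.of_apply, Finset.prod_ne_zero_iff]
  exact fun i _ => Amat_ne (he i) (hpos i) (h4 i) (h i)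

include he in
lemma Mbig_zero_of {u v : (i : Fin d) → Fin (n i)} (i : Fin d) (h : u i = v i) :
    Mbig n u v = 0 :=
  Finset.prod_eq_zero (Finset.mem_univ i) (by rw [h]; exact Amat_diag (he i) _)

end Stmt17

/-! ### Spectrum and `minQ` lemmas -/

namespace Stmt17

variable {V : Type*} [Fintype V] [DecidableEq V]

lemma spectrum_of_invol {M : Matrix V V ℝ} (hM2 : M * M = 1) (h1 : M ≠ 1) (h2 : M ≠ -1) :
    spectrum ℝ M = {1, -1} := by
  ext lam
  simp only [Set.mem_insert_iff, Set.mem_singleton_iff]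
  constructor
  · intro hmem
    by_contra hc
    push_neg at hc
    obtain ⟨hl1, hl2⟩ := hc
    have hsq : lam ^ 2 - 1 ≠ 0 := by
      intro h
      have : (lam - 1) * (lam + 1) = 0 := by ring_nf; linarith [h]
      rcases mul_eq_zero.1 this with h | h
      · exact hl1 (by linarith)
      · exact hl2 (by linarith)
    apply spectrum.notMem_iff.2 _ hmem
    have hcomm : M * algebraMap ℝ (Matrix V V ℝ) lam = algebraMap ℝ (Matrix V V ℝ) lam * M :=
      (Algebra.commutes lam M).symm
    have key : (algebraMap ℝ (Matrix V V ℝ) lam - M) * (algebraMap ℝ (Matrix V V ℝ) lam + M)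
        = (lam ^ 2 - 1) • (1 : Matrix V V ℝ) := by
      rw [sub_mul, mul_add, mul_add, hM2, ← hcomm]
      rw [Algebra.algebraMap_eq_smul_one]
      rw [smul_mul_smul_comm, one_mul, sub_smul, one_smul, sq]
      abel
    have key2 : (algebraMap ℝ (Matrix V V ℝ) lam + M) * (algebraMap ℝ (Matrix V V ℝ) lam - M)
        = (lam ^ 2 - 1) • (1 : Matrix V V ℝ) := by
      rw [add_mul, mul_sub, mul_sub, hM2, ← hcomm]
      rw [Algebra.algebraMap_eq_smul_one]
      rw [smul_mul_smul_comm, one_mul, sub_smul, one_smul, sq]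
      abel
    refine ⟨⟨algebraMap ℝ (Matrix V V ℝ) lam - M,
      (lam ^ 2 - 1)⁻¹ • (algebraMap ℝ (Matrix V V ℝ) lam + M), ?_, ?_⟩, rfl⟩
    · rw [Matrix.mul_smul, key, smul_smul, inv_mul_cancel₀ hsq, one_smul]
    · rw [Matrix.smul_mul, key2, smul_smul, inv_mul_cancel₀ hsq, one_smul]
  · intro hmem
    rcases hmem with h | h
    · subst h
      rw [spectrum.mem_iff]
      intro hu
      have hfac : (algebraMap ℝ (Matrix V V ℝ) 1 - M) * (1 + M) = 0 := by
        rw [_root_.map_one, sub_mul, mul_add, mul_add, hM2, one_mul, one_mul, mul_one]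
        abel
      have hc := hu.unit.inv_mul_cancel_left (1 + M)
      rw [hu.unit_spec, hfac, mul_zero] at hc
      exact h2 (eq_neg_of_add_eq_zero_right hc.symm)
    · subst h
      rw [spectrum.mem_iff]
      intro hu
      have hrw : algebraMap ℝ (Matrix V V ℝ) (-1) - M = -(1 + M) := by
        rw [map_neg, _root_.map_one]; abel
      rw [hrw, IsUnit.neg_iff] at hu
      have hfac : (1 + M) * ((1 : Matrix V V ℝ) - M) = 0 := by
        rw [add_mul, mul_sub, mul_sub, hM2, one_mul, one_mul, mul_one]
        abel
      have hc := hu.unit.inv_mul_cancel_left ((1 : Matrix V V ℝ) - M)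
      rw [hu.unit_spec, hfac, mul_zero] at hc
      exact h1 (sub_eq_zero.mp hc.symm).symm

variable [Nonempty V]

lemma scalar_of_single_spectrum {M : Matrix V V ℝ} (hH : M.IsHermitian)
    (hsub : ∀ x ∈ spectrum ℝ M, ∀ y ∈ spectrum ℝ M, x = y) :
    ∃ c : ℝ, M = c • 1 := by
  obtain ⟨i0⟩ := (inferInstance : Nonempty V)
  refine ⟨hH.eigenvalues i0, ?_⟩
  have hall : ∀ i, hH.eigenvalues i = hH.eigenvalues i0 := fun i =>
    hsub _ (hH.eigenvalues_mem_spectrum_real i) _ (hH.eigenvalues_mem_spectrum_real i0)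
  have hdiag : Matrix.diagonal (RCLike.ofReal ∘ hH.eigenvalues : V → ℝ)
      = (hH.eigenvalues i0) • (1 : Matrix V V ℝ) := by
    ext i j
    by_cases h : i = j
    · subst h; simp [hall i]
    · simp [Matrix.diagonal_apply_ne _ h, Matrix.one_apply_ne h]
  calc M = _ := hH.spectral_theorem
    _ = (hH.eigenvalues i0) • ((hH.eigenvectorUnitary : Matrix V V ℝ) *
          star (hH.eigenvectorUnitary : Matrix V V ℝ)) := by
        rw [hdiag, Unitary.conjStarAlgAut_apply, Matrix.mul_smul, Matrix.smul_mul, mul_one]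
    _ = (hH.eigenvalues i0) • 1 := by
        rw [(Matrix.mem_unitaryGroup_iff).mp hH.eigenvectorUnitary.2]

lemma two_le_ncard {G : SimpleGraph V} {M : Matrix V V ℝ} (hM : M ∈ Sset G)
    {a b : V} (hab : a ≠ b) (hadj : G.Adj a b) : 2 ≤ (spectrum ℝ M).ncard := by
  have hH : M.IsHermitian := by
    rw [Matrix.IsHermitian, Matrix.conjTranspose_eq_transpose_of_trivial]
    exact hM.1
  by_contra hlt
  push_neg at hlt
  have hle : (spectrum ℝ M).ncard ≤ 1 := by omega
  have hsub := (Set.ncard_le_one Matrix.finite_real_spectrum).1 hle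
  obtain ⟨c, hc⟩ := scalar_of_single_spectrum hH hsub
  have hne : M a b ≠ 0 := (hM.2 a b hab).2 hadj
  apply hne
  rw [hc]
  simp [Matrix.one_apply, hab]

lemma minQ_eq_two {G : SimpleGraph V} {M0 : Matrix V V ℝ} (hM0 : M0 ∈ Sset G)
    (hspec : spectrum ℝ M0 = {1, -1}) {a b : V} (hab : a ≠ b) (hadj : G.Adj a b) :
    minQ G = 2 := by
  have h2mem : 2 ∈ {k : ℕ | ∃ M ∈ Sset G, (spectrum ℝ M).ncard = k} :=
    ⟨M0, hM0, by rw [hspec]; exact Set.ncard_pair (by norm_num)⟩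
  refine le_antisymm (Nat.sInf_le h2mem) (le_csInf ⟨2, h2mem⟩ ?_)
  rintro k ⟨M, hM, rfl⟩
  exact two_le_ncard hM hab hadj

end Stmt17

end Stmt17Aux

/-- Let `d ≥ 1` and let `n₁,…,n_d` be even positive integers all `≠ 4`.
Then the tensor product `G = K_{n₁} × ⋯ × K_{n_d}` admits a matrix `M ∈ S(G)` with zero
diagonal and `M² = I`; hence `M` has exactly the two distinct eigenvalues `1` and `−1`,
and `q(G) = 2`.  In particular, for every even `n ≠ 4` (with `n > 0`), the distance-`d`
graph `H(d,n,d)` of the Hamming graph satisfies `q(H(d,n,d)) = 2`. -/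
theorem stmt_17 (d : ℕ) (hd : 1 ≤ d) :
    (∀ n : Fin d → ℕ, (∀ i, Even (n i)) → (∀ i, 0 < n i) → (∀ i, n i ≠ 4) →
      (∃ M ∈ Sset (tensorComplete d n),
        (∀ v, M v v = 0) ∧ M * M = 1 ∧ spectrum ℝ M = {1, -1}) ∧
      minQ (tensorComplete d n) = 2) ∧
    (∀ n : ℕ, Even n → 0 < n → n ≠ 4 → minQ (HammingDistD d n) = 2) := by
  have main : ∀ n : Fin d → ℕ, (∀ i, Even (n i)) → (∀ i, 0 < n i) → (∀ i, n i ≠ 4) →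
      (∃ M ∈ Sset (tensorComplete d n),
        (∀ v, M v v = 0) ∧ M * M = 1 ∧ spectrum ℝ M = {1, -1}) ∧
      minQ (tensorComplete d n) = 2 := by
    intro n heven hpos h4
    have he : ∀ i, n i / 2 + n i / 2 = n i := by
      intro i
      obtain ⟨r, hr⟩ := heven i
      omega
    have h2le : ∀ i, 2 ≤ n i := by
      intro i
      obtain ⟨r, hr⟩ := heven i
      have := hpos i
      omega
    haveI : Nonempty ((i : Fin d) → Fin (n i)) := ⟨fun i => ⟨0, hpos i⟩⟩
    set M := Stmt17.Mbig n with hMdef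
    -- vertices for edges / non-scalarity
    have i0 : Fin d := ⟨0, hd⟩
    set a : (i : Fin d) → Fin (n i) := fun i => ⟨0, hpos i⟩ with ha
    set b : (i : Fin d) → Fin (n i) := fun i => ⟨1, h2le i⟩ with hb
    have habi : ∀ i, a i ≠ b i := by
      intro i
      simp [ha, hb, Fin.ext_iff]
    have hab : a ≠ b := fun h => habi i0 (congrFun h i0)
    have hadj : (tensorComplete d n).Adj a b := ⟨hab, habi⟩
    -- membership in S(G)
    have hdiag : ∀ v, M v v = 0 := Stmt17.Mbig_diag he hd
    have hmem : M ∈ Sset (tensorComplete d n) := by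
      refine ⟨Stmt17.Mbig_symm he, fun u v huv => ?_⟩
      constructor
      · intro hne
        refine ⟨huv, fun i => ?_⟩
        intro he'
        exact hne (Stmt17.Mbig_zero_of he i he')
      · intro hadj'
        exact Stmt17.Mbig_ne he hpos h4 hadj'.2
    have hsq : M * M = 1 := Stmt17.Mbig_sq he hpos h4
    have hne1 : M ≠ 1 := by
      intro h
      have := congrFun (congrFun h a) a
      rw [hdiag a, Matrix.one_apply_eq] at this
      norm_num at this
    have hnen1 : M ≠ -1 := by
      intro h
      have := congrFun (congrFun h a) a
      rw [hdiag a] at this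
      simp [Matrix.one_apply_eq] at this
    have hspec : spectrum ℝ M = {1, -1} := Stmt17.spectrum_of_invol hsq hne1 hnen1
    exact ⟨⟨M, hmem, hdiag, hsq, hspec⟩, Stmt17.minQ_eq_two hmem hspec hab hadj⟩
  refine ⟨main, ?_⟩
  intro n heven hpos h4
  have hHG : HammingDistD d n = tensorComplete d (fun _ => n) := by
    ext u v
    simp only [HammingDistD, tensorComplete]
    constructor
    · rintro ⟨huv, hdist⟩
      refine ⟨huv, fun i => ?_⟩
      have hfull : (Finset.univ.filter fun i => u i ≠ v i) = Finset.univ :=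
        Finset.eq_univ_of_card _ (by rw [hammingDist] at hdist; rw [hdist, Fintype.card_fin])
      have := hfull ▸ Finset.mem_univ i
      exact (Finset.mem_filter.mp this).2
    · rintro ⟨huv, hall⟩
      refine ⟨huv, ?_⟩
      rw [hammingDist]
      have hfull : (Finset.univ.filter fun i => u i ≠ v i) = Finset.univ :=
        Finset.eq_univ_iff_forall.2 fun i => Finset.mem_filter.mpr ⟨Finset.mem_univ i, hall i⟩
      rw [hfull, Finset.card_univ, Fintype.card_fin]
  rw [hHG]
  exact (main (fun _ => n) (fun _ => heven) (fun _ => hpos) (fun _ => h4)).2
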